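/- Let f̃: ℝ → ℝ, λ > 0, and define f(α) = f̃(α) + λ·𝟙[α ≠ 0], where 𝟙[α ≠ 0] is 1 for α ≠ 0 and 0 for α = 0. Then the Fenchel conjugate satisfies f*(β) = max{-f̃(0), f̃*(β) - λ} for all β ∈ ℝ. -/

import Mathlib

/-- For `f(α) = f̃(α) + λ·𝟙[α ≠ 0]` with `f̃` continuous and `λ > 0`, the Fenchel
conjugate satisfies `f*(β) = max{-f̃(0), f̃*(β) - λ}` (in the extended reals). -/
theorem stmt_4 (ftil : ℝ → ℝ) (hcont : Continuous ftil) (lam : ℝ) (hlam : 0 < lam)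
    (f : ℝ → ℝ) (hf : ∀ α : ℝ, f α = ftil α + if α = 0 then 0 else lam) (β : ℝ) :
    (⨆ α : ℝ, ((β * α - f α : ℝ) : EReal)) =
      max ((-ftil 0 : ℝ) : EReal)
        ((⨆ α : ℝ, ((β * α - ftil α : ℝ) : EReal)) - (lam : EReal)) := by
  set g : ℝ → EReal := fun α => ((β * α - ftil α : ℝ) : EReal) with hg
  set S : EReal := ⨆ α : ℝ, ((β * α - f α : ℝ) : EReal) with hS
  have hne : ∀ α : ℝ, α ≠ 0 → ((β * α - f α : ℝ) : EReal) = g α - (lam : EReal) := by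
    intro α h0
    simp only [hg, hf α, if_neg h0]
    rw [← EReal.coe_sub]
    norm_cast
    ring
  apply le_antisymm
  · apply iSup_le
    intro α
    rcases eq_or_ne α 0 with h0 | h0
    · subst h0
      refine le_trans (le_of_eq ?_) (le_max_left _ _)
      simp [hf]
    · rw [hne α h0]
      refine le_trans ?_ (le_max_right _ _)
      exact EReal.sub_le_sub (le_iSup g α) le_rfl
  · apply max_le
    · have h0 : ((-ftil 0 : ℝ) : EReal) = ((β * 0 - f 0 : ℝ) : EReal) := by simp [hf]
      rw [h0]
      exact le_iSup (fun α : ℝ => ((β * α - f α : ℝ) : EReal)) 0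
    · have key : (⨆ α : ℝ, g α) ≤ S + (lam : EReal) := by
        have hgen : ∀ α : ℝ, α ≠ 0 → g α ≤ S + (lam : EReal) := by
          intro α h0
          have : g α = ((β * α - f α : ℝ) : EReal) + (lam : EReal) := by
            rw [hne α h0, EReal.sub_add_cancel]
          rw [this]
          exact add_le_add (le_iSup (fun α : ℝ => ((β * α - f α : ℝ) : EReal)) α) le_rfl
        apply iSup_le
        intro α
        rcases eq_or_ne α 0 with h0 | h0
        · subst h0
          -- limit argument: g(1/(n+1)) → g 0
          set u : ℕ → ℝ := fun n => 1 / (n + 1 : ℝ) with hu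
          have hu0 : Filter.Tendsto u Filter.atTop (nhds 0) :=
            tendsto_one_div_add_atTop_nhds_zero_nat
          have hun : ∀ n, u n ≠ 0 := by
            intro n
            simp only [hu]
            positivity
          have hx : Filter.Tendsto (fun n => ((β * u n - ftil (u n) : ℝ) : EReal))
              Filter.atTop (nhds (g 0)) := by
            apply (continuous_coe_real_ereal.tendsto _).comp
            have : Filter.Tendsto (fun n => β * u n - ftil (u n)) Filter.atTop
                (nhds (β * 0 - ftil 0)) := by
              apply Filter.Tendsto.sub
              · exact (continuous_const.mul continuous_id).continuousAt.tendsto.comp hu0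
              · exact hcont.continuousAt.tendsto.comp hu0
            exact this
          refine le_of_tendsto hx (Filter.Eventually.of_forall fun n => ?_)
          exact hgen (u n) (hun n)
        · exact hgen α h0
      calc (⨆ α : ℝ, g α) - (lam : EReal) ≤ (S + (lam : EReal)) - (lam : EReal) :=
            EReal.sub_le_sub key le_rfl
        _ = S := EReal.add_sub_cancel_right
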